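/- Let p be an odd prime and x, y, z pairwise coprime nonzero integers with x^p + y^p = z^p and p dividing z. Then: (a) every prime divisor of (z^p − y^p)/(z − y) and every prime divisor of (z^p − x^p)/(z − x) is congruent to 1 modulo 2p (i.e., is of the form 2Np + 1); and (b) every prime divisor of (x^p + y^p)/(x + y) other than p is congruent to 1 modulo 2p^2 (i.e., is of the form 2Np^2 + 1). (Theorem 2 of Germain's Manuscript B.) -/

import Mathlib

private lemma germain_sum_mul {R : Type*} [CommRing R] (n : ℕ) (u v : R) :
    (∑ i ∈ Finset.range n, u ^ (n - 1 - i) * v ^ i) * (u - v) = u ^ n - v ^ n := by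
  have hc : (∑ i ∈ Finset.range n, u ^ (n - 1 - i) * v ^ i)
      = ∑ i ∈ Finset.range n, v ^ i * u ^ (n - 1 - i) :=
    Finset.sum_congr rfl fun i _ => mul_comm _ _
  have h := geom_sum₂_mul v u n
  rw [hc]
  linear_combination -h

private lemma germain_sum_neg (n : ℕ) (u v : ℤ) :
    (∑ i ∈ Finset.range n, (-1) ^ i * u ^ (n - 1 - i) * (-v) ^ i)
      = ∑ i ∈ Finset.range n, u ^ (n - 1 - i) * v ^ i := by
  refine Finset.sum_congr rfl fun i _ => ?_
  calc (-1 : ℤ) ^ i * u ^ (n - 1 - i) * (-v) ^ i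
      = ((-1) * -v) ^ i * u ^ (n - 1 - i) := by rw [mul_pow]; ring
    _ = u ^ (n - 1 - i) * v ^ i := by rw [neg_one_mul, neg_neg]; ring

private lemma germain_sum_neg' (n : ℕ) (u v : ℤ) :
    (∑ i ∈ Finset.range n, (-1) ^ i * u ^ (n - 1 - i) * v ^ i)
      = ∑ i ∈ Finset.range n, u ^ (n - 1 - i) * (-v) ^ i := by
  refine Finset.sum_congr rfl fun i _ => ?_
  calc (-1 : ℤ) ^ i * u ^ (n - 1 - i) * v ^ i
      = ((-1) * v) ^ i * u ^ (n - 1 - i) := by rw [mul_pow]; ring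
    _ = u ^ (n - 1 - i) * (-v) ^ i := by rw [neg_one_mul]; ring

private lemma germain_sum_eq {R : Type*} [CommRing R] (n : ℕ) (u : R) :
    (∑ i ∈ Finset.range n, u ^ (n - 1 - i) * u ^ i) = (n : R) * u ^ (n - 1) := by
  have h : ∀ i ∈ Finset.range n, u ^ (n - 1 - i) * u ^ i = u ^ (n - 1) := by
    intro i hi
    rw [← pow_add]
    congr 1
    have := Finset.mem_range.mp hi
    omega
  rw [Finset.sum_congr rfl h, Finset.sum_const, Finset.card_range, nsmul_eq_mul]

private lemma germain_no_common {a b : ℤ} (h : IsCoprime a b) {q : ℕ} (hq : q.Prime)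
    (h1 : (q : ℤ) ∣ a) (h2 : (q : ℤ) ∣ b) : False := by
  have hu := h.isUnit_of_dvd' h1 h2
  rw [Int.isUnit_iff] at hu
  have := hq.two_le
  omega

private lemma germain_orderOf_dvd {q : ℕ} [Fact q.Prime] {n : ℕ} {t : ZMod q}
    (ht0 : t ≠ 0) (hord : orderOf t = n) : n ∣ q - 1 := by
  rw [← hord]
  exact orderOf_dvd_of_pow_eq_one (ZMod.pow_card_sub_one_eq_one ht0)

private lemma germain_order_p {q : ℕ} [Fact q.Prime] {p : ℕ} (hp : p.Prime) {t : ZMod q}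
    (ht1 : t ≠ 1) (htp : t ^ p = 1) : orderOf t = p := by
  have h1 : orderOf t ∣ p := orderOf_dvd_of_pow_eq_one htp
  rcases (Nat.Prime.eq_one_or_self_of_dvd hp _ h1) with h | h
  · exact absurd (orderOf_eq_one_iff.mp h) ht1
  · exact h

private lemma germain_conclude {q n : ℕ} (hq : q.Prime) (hodd : Odd n) (h2 : 2 ≤ n)
    (hdvd : n ∣ q - 1) : q ≡ 1 [MOD 2 * n] := by
  have hq2 := hq.two_le
  have hqn : n ≤ q - 1 := Nat.le_of_dvd (by omega) hdvd
  have hqne2 : q ≠ 2 := by omega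
  have hqodd : Odd q := hq.odd_of_ne_two hqne2
  have h2dvd : 2 ∣ q - 1 := (Nat.Odd.sub_odd hqodd odd_one).two_dvd
  have hmul : 2 * n ∣ q - 1 :=
    (Nat.coprime_two_left.mpr hodd).mul_dvd_of_dvd_of_dvd h2dvd hdvd
  exact ((Nat.modEq_iff_dvd' (by omega)).mpr hmul).symm

private lemma germain_barlow (p : ℕ) (hp : p.Prime) (hpodd : Odd p)
    (x y z : ℤ) (hyz : IsCoprime y z) (hpz : (p : ℤ) ∣ z)
    (hfe : z ^ p - y ^ p = x ^ p) : ∃ a : ℤ, z - y = a ^ p := by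
  set S : ℤ := ∑ i ∈ Finset.range p, z ^ (p - 1 - i) * y ^ i with hS
  have hmul : (z - y) * S = x ^ p := by
    rw [mul_comm, hS, germain_sum_mul, hfe]
  have hcop : IsCoprime (z - y) S := by
    rw [Int.isCoprime_iff_gcd_eq_one]
    by_contra hne
    obtain ⟨r, hr, hrdvd⟩ := Nat.exists_prime_and_dvd hne
    have h1 : (r : ℤ) ∣ z - y :=
      dvd_trans (Int.natCast_dvd_natCast.mpr hrdvd) (Int.gcd_dvd_left _ _)
    have h2 : (r : ℤ) ∣ S :=
      dvd_trans (Int.natCast_dvd_natCast.mpr hrdvd) (Int.gcd_dvd_right _ _)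
    have hrz : ¬ (r : ℤ) ∣ z := by
      intro hdz
      exact germain_no_common hyz hr (by have := dvd_sub hdz h1; simpa using this) hdz
    haveI := Fact.mk hr
    have hz0 : ((z : ZMod r)) ≠ 0 := fun h => hrz ((ZMod.intCast_zmod_eq_zero_iff_dvd z r).mp h)
    have hzy : ((z : ZMod r)) = (y : ZMod r) := by
      have h' := (ZMod.intCast_zmod_eq_zero_iff_dvd (z - y) r).mpr h1
      push_cast at h'
      exact sub_eq_zero.mp h'
    have hS0 : ((S : ZMod r)) = 0 := (ZMod.intCast_zmod_eq_zero_iff_dvd S r).mpr h2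
    rw [hS] at hS0
    push_cast at hS0
    rw [hzy, germain_sum_eq] at hS0
    have hy0 : ((y : ZMod r)) ≠ 0 := by rw [← hzy]; exact hz0
    have hp0 : ((p : ℕ) : ZMod r) = 0 := by
      rcases mul_eq_zero.mp hS0 with h | h
      · exact h
      · exact absurd h (pow_ne_zero _ hy0)
    have hdvdp : r ∣ p := (ZMod.natCast_eq_zero_iff p r).mp hp0
    have hrp : r = p := (Nat.prime_dvd_prime_iff_eq hr hp).mp hdvdp
    subst hrp
    have hry : (r : ℤ) ∣ y := by have := dvd_sub hpz h1; simpa using this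
    exact germain_no_common hyz hr hry hpz
  obtain ⟨a, ha⟩ := Int.eq_pow_of_mul_eq_pow_odd_left hcop hpodd hmul
  exact ⟨a, ha⟩

private lemma germain_part_a (p q : ℕ) (hp : p.Prime) (hpodd : Odd p) (hq : q.Prime)
    (x y z : ℤ) (hxy : IsCoprime x y) (hxz : IsCoprime x z) (hpz : (p : ℤ) ∣ z)
    (hfe : z ^ p - y ^ p = x ^ p)
    (hdvd : (q : ℤ) ∣ ∑ i ∈ Finset.range p, z ^ (p - 1 - i) * y ^ i) :
    q ≡ 1 [MOD 2 * p] := by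
  set S : ℤ := ∑ i ∈ Finset.range p, z ^ (p - 1 - i) * y ^ i with hS
  have hmul : S * (z - y) = x ^ p := by rw [hS, germain_sum_mul, hfe]
  have hqx : (q : ℤ) ∣ x := by
    have hd : (q : ℤ) ∣ x ^ p := hmul ▸ hdvd.mul_right (z - y)
    exact (Nat.prime_iff_prime_int.mp hq).dvd_of_dvd_pow hd
  have hqy : ¬ (q : ℤ) ∣ y := fun h => germain_no_common hxy hq hqx h
  have hqz : ¬ (q : ℤ) ∣ z := fun h => germain_no_common hxz hq hqx h
  haveI := Fact.mk hq
  have hy0 : ((y : ZMod q)) ≠ 0 := fun h => hqy ((ZMod.intCast_zmod_eq_zero_iff_dvd y q).mp h)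
  have hz0 : ((z : ZMod q)) ≠ 0 := fun h => hqz ((ZMod.intCast_zmod_eq_zero_iff_dvd z q).mp h)
  have hS0 : ((S : ZMod q)) = 0 := (ZMod.intCast_zmod_eq_zero_iff_dvd S q).mpr hdvd
  rw [hS] at hS0
  push_cast at hS0
  have hzy : ((z : ZMod q)) ≠ (y : ZMod q) := by
    intro h
    rw [h, germain_sum_eq] at hS0
    rcases mul_eq_zero.mp hS0 with h' | h'
    · have hqdp : q ∣ p := (ZMod.natCast_eq_zero_iff p q).mp h'
      have hqp : q = p := (Nat.prime_dvd_prime_iff_eq hq hp).mp hqdp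
      exact germain_no_common hxz hq hqx (hqp ▸ hpz)
    · exact pow_ne_zero _ hy0 h'
  have hpowq : ((z : ZMod q)) ^ p = (y : ZMod q) ^ p := by
    have hx0 : ((x : ZMod q)) = 0 := (ZMod.intCast_zmod_eq_zero_iff_dvd x q).mpr hqx
    have hc := congrArg (fun t : ℤ => ((t : ZMod q))) hfe
    push_cast at hc
    rw [hx0, zero_pow hp.ne_zero] at hc
    exact sub_eq_zero.mp hc
  set t := (z : ZMod q) / (y : ZMod q) with ht
  have ht0 : t ≠ 0 := div_ne_zero hz0 hy0
  have ht1 : t ≠ 1 := by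
    intro h
    have hc := div_mul_cancel₀ (z : ZMod q) hy0
    rw [← ht, h, one_mul] at hc
    exact hzy hc.symm
  have htp : t ^ p = 1 := by rw [ht, div_pow, hpowq, div_self (pow_ne_zero _ hy0)]
  exact germain_conclude hq hpodd hp.two_le
    (germain_orderOf_dvd ht0 (germain_order_p hp ht1 htp))

private lemma germain_part_b (p q : ℕ) (hp : p.Prime) (hpodd : Odd p) (hq : q.Prime)
    (hqp : q ≠ p) (x y z : ℤ) (hxy : IsCoprime x y) (hyz : IsCoprime y z)
    (hxz : IsCoprime x z) (hpz : (p : ℤ) ∣ z) (hfermat : x ^ p + y ^ p = z ^ p)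
    (hdvd : (q : ℤ) ∣ ∑ i ∈ Finset.range p, (-1) ^ i * x ^ (p - 1 - i) * y ^ i) :
    q ≡ 1 [MOD 2 * p ^ 2] := by
  rw [germain_sum_neg'] at hdvd
  set S : ℤ := ∑ i ∈ Finset.range p, x ^ (p - 1 - i) * (-y) ^ i with hS
  have hmul : S * (x + y) = z ^ p := by
    have h := germain_sum_mul p x (-y)
    rw [sub_neg_eq_add, hpodd.neg_pow, sub_neg_eq_add, hfermat] at h
    exact h
  have hqz : (q : ℤ) ∣ z := by
    have hd : (q : ℤ) ∣ z ^ p := hmul ▸ hdvd.mul_right (x + y)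
    exact (Nat.prime_iff_prime_int.mp hq).dvd_of_dvd_pow hd
  have hqx : ¬ (q : ℤ) ∣ x := fun h => germain_no_common hxz hq h hqz
  have hqy : ¬ (q : ℤ) ∣ y := fun h => germain_no_common hyz hq h hqz
  obtain ⟨a, ha⟩ := germain_barlow p hp hpodd x y z hyz hpz (by linarith)
  obtain ⟨b, hb⟩ := germain_barlow p hp hpodd y x z hxz hpz (by linarith)
  haveI := Fact.mk hq
  have hx0 : ((x : ZMod q)) ≠ 0 := fun h => hqx ((ZMod.intCast_zmod_eq_zero_iff_dvd x q).mp h)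
  have hy0 : ((y : ZMod q)) ≠ 0 := fun h => hqy ((ZMod.intCast_zmod_eq_zero_iff_dvd y q).mp h)
  have hz0 : ((z : ZMod q)) = 0 := (ZMod.intCast_zmod_eq_zero_iff_dvd z q).mpr hqz
  have hny0 : (-(y : ZMod q)) ≠ 0 := neg_ne_zero.mpr hy0
  have ha' : ((a : ZMod q)) ^ p = -(y : ZMod q) := by
    have hc := congrArg (fun t : ℤ => ((t : ZMod q))) ha
    push_cast at hc
    rw [hz0, zero_sub] at hc
    exact hc.symm
  have hb' : ((b : ZMod q)) ^ p = -(x : ZMod q) := by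
    have hc := congrArg (fun t : ℤ => ((t : ZMod q))) hb
    push_cast at hc
    rw [hz0, zero_sub] at hc
    exact hc.symm
  have ha0 : ((a : ZMod q)) ≠ 0 := by
    intro h
    rw [h, zero_pow hp.ne_zero] at ha'
    exact hny0 ha'.symm
  have hb0 : ((b : ZMod q)) ≠ 0 := by
    intro h
    rw [h, zero_pow hp.ne_zero] at hb'
    exact (neg_ne_zero.mpr hx0) hb'.symm
  have hS0 : ((S : ZMod q)) = 0 := (ZMod.intCast_zmod_eq_zero_iff_dvd S q).mpr hdvd
  rw [hS] at hS0
  push_cast at hS0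
  have hxny : ((x : ZMod q)) ≠ -(y : ZMod q) := by
    intro h
    rw [← h, germain_sum_eq] at hS0
    rcases mul_eq_zero.mp hS0 with h' | h'
    · exact hqp ((Nat.prime_dvd_prime_iff_eq hq hp).mp
        ((ZMod.natCast_eq_zero_iff p q).mp h'))
    · exact pow_ne_zero _ hx0 h'
  have hpowq : ((x : ZMod q)) ^ p = (-(y : ZMod q)) ^ p := by
    have hc := congrArg (fun t : ℤ => ((t : ZMod q))) hfermat
    push_cast at hc
    rw [hz0, zero_pow hp.ne_zero] at hc
    rw [hpodd.neg_pow]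
    linear_combination hc
  set t := (x : ZMod q) / (-(y : ZMod q)) with ht
  have htp : t ^ p = 1 := by rw [ht, div_pow, hpowq, div_self (pow_ne_zero _ hny0)]
  have ht1 : t ≠ 1 := by
    intro h
    have hc := div_mul_cancel₀ (x : ZMod q) hny0
    rw [← ht, h, one_mul] at hc
    exact hxny hc.symm
  set w := -(b : ZMod q) / (a : ZMod q) with hw
  have hwp : w ^ p = t := by
    rw [hw, div_pow, hpodd.neg_pow, hb', ha', ht, neg_neg]
  have hw0 : w ≠ 0 := div_ne_zero (neg_ne_zero.mpr hb0) ha0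
  have hwp2 : w ^ (p * p) = 1 := by rw [pow_mul, hwp, htp]
  have hord : orderOf w = p * p := by
    have hdvd2 : orderOf w ∣ p ^ 2 := orderOf_dvd_of_pow_eq_one (by rw [pow_two]; exact hwp2)
    obtain ⟨k, hk, hko⟩ := (Nat.dvd_prime_pow hp).mp hdvd2
    interval_cases k
    · rw [pow_zero] at hko
      exact absurd (by rw [← hwp, orderOf_eq_one_iff.mp hko, one_pow]) ht1
    · rw [pow_one] at hko
      have ht1' : t = 1 := by rw [← hwp, ← hko]; exact pow_orderOf_eq_one w
      exact absurd ht1' ht1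
    · rw [hko, pow_two]
  have hdq : p * p ∣ q - 1 := germain_orderOf_dvd hw0 hord
  have hfin := germain_conclude hq (hpodd.mul hpodd)
    (le_trans (by norm_num) (Nat.mul_le_mul hp.two_le hp.two_le)) hdq
  rw [pow_two]
  exact hfin

/-- Theorem 2 of Germain's Manuscript B: if x, y, z are pairwise coprime
nonzero integers with x^p + y^p = z^p and p ∣ z, then (a) every prime divisor
of the cofactors φ(z, −y) and φ(z, −x) is ≡ 1 (mod 2p), and (b) every prime
divisor of the cofactor φ(x, y) other than p is ≡ 1 (mod 2p²). -/
theorem manuscript_B_theorem_2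
    (p : ℕ) (hp : p.Prime) (hpodd : Odd p)
    (x y z : ℤ) (hx : x ≠ 0) (hy : y ≠ 0) (hz : z ≠ 0)
    (hxy : IsCoprime x y) (hyz : IsCoprime y z) (hxz : IsCoprime x z)
    (hfermat : x ^ p + y ^ p = z ^ p) (hpz : (p : ℤ) ∣ z) :
    (∀ q : ℕ, q.Prime →
      ((q : ℤ) ∣ ∑ i ∈ Finset.range p, (-1) ^ i * z ^ (p - 1 - i) * (-y) ^ i →
        q ≡ 1 [MOD 2 * p]) ∧
      ((q : ℤ) ∣ ∑ i ∈ Finset.range p, (-1) ^ i * z ^ (p - 1 - i) * (-x) ^ i →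
        q ≡ 1 [MOD 2 * p])) ∧
    (∀ q : ℕ, q.Prime → q ≠ p →
      (q : ℤ) ∣ ∑ i ∈ Finset.range p, (-1) ^ i * x ^ (p - 1 - i) * y ^ i →
        q ≡ 1 [MOD 2 * p ^ 2]) := by
  refine ⟨fun q hq => ⟨fun hdvd => ?_, fun hdvd => ?_⟩, fun q hq hqp hdvd => ?_⟩
  · rw [germain_sum_neg] at hdvd
    exact germain_part_a p q hp hpodd hq x y z hxy hxz hpz (by linarith) hdvd
  · rw [germain_sum_neg] at hdvd
    exact germain_part_a p q hp hpodd hq y x z hxy.symm hyz hpz (by linarith) hdvd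
  · exact germain_part_b p q hp hpodd hq hqp x y z hxy hyz hxz hpz hfermat hdvd
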